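/- Let V be a finite-dimensional complex vector space with coordinates ν = (ν_1, ..., ν_n). If φ is an entire function of Paley-Wiener type on V (i.e., entire with bounds |φ(ν)| ≤ C_N (1+|ν|)^{-N} e^{r|Re(ν)|} for all N) that vanishes on the hyperplane ν_i = 0, then there exists a Paley-Wiener function ψ on V such that φ(ν) = ν_i ψ(ν) for all ν. -/

import Mathlib

open scoped BigOperators

/-- The hermitian norm of the real part of `ν ∈ ℂⁿ`. -/
noncomputable def reNorm {n : ℕ} (ν : EuclideanSpace ℂ (Fin n)) : ℝ :=
  Real.sqrt (∑ j, (ν j).re ^ 2)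

/-- A Paley-Wiener function of exponent `r` on `ℂⁿ`: an entire function `φ` such that for
every `N` there is `C_N` with `|φ(ν)| ≤ C_N (1+|ν|)^{-N} e^{r |Re ν|}`. -/
def IsPaleyWienerOfExp {n : ℕ} (r : ℝ) (φ : EuclideanSpace ℂ (Fin n) → ℂ) : Prop :=
  Differentiable ℂ φ ∧
    ∀ N : ℕ, ∃ C : ℝ, ∀ ν, (1 + ‖ν‖) ^ N * ‖φ ν‖ ≤ C * Real.exp (r * reNorm ν)

open Metric Set Complex

section Aux

variable {n : ℕ}

/-- Replace the `i`-th coordinate of `ν` by `z`. -/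
noncomputable def pwUpd (i : Fin n) (ν : EuclideanSpace ℂ (Fin n)) (z : ℂ) :
    EuclideanSpace ℂ (Fin n) :=
  ν + (z - ν i) • EuclideanSpace.single i (1 : ℂ)

lemma pwUpd_apply_i (i : Fin n) (ν : EuclideanSpace ℂ (Fin n)) (z : ℂ) : pwUpd i ν z i = z := by
  simp [pwUpd, EuclideanSpace.single_apply]

lemma pwUpd_self (i : Fin n) (ν : EuclideanSpace ℂ (Fin n)) : pwUpd i ν (ν i) = ν := by
  simp [pwUpd]

lemma pwUpd_sub_norm (i : Fin n) (ν : EuclideanSpace ℂ (Fin n)) (z : ℂ) :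
    ‖pwUpd i ν z - ν‖ = ‖z - ν i‖ := by
  simp [pwUpd, norm_smul, EuclideanSpace.norm_single]

lemma pw_coord_le (i : Fin n) (ν : EuclideanSpace ℂ (Fin n)) : ‖ν i‖ ≤ ‖ν‖ := by
  rw [EuclideanSpace.norm_eq]
  have h : ‖ν i‖ = Real.sqrt (‖ν i‖ ^ 2) := by
    rw [Real.sqrt_sq (norm_nonneg _)]
  rw [h]
  exact Real.sqrt_le_sqrt (Finset.single_le_sum (f := fun j => ‖ν j‖ ^ 2)
    (fun j _ => sq_nonneg _) (Finset.mem_univ i))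

/-- The vector of real parts. -/
noncomputable def reVec (ν : EuclideanSpace ℂ (Fin n)) : EuclideanSpace ℝ (Fin n) :=
  WithLp.toLp 2 (fun j => (ν j).re)

lemma reNorm_eq (ν : EuclideanSpace ℂ (Fin n)) : reNorm ν = ‖reVec ν‖ := by
  rw [EuclideanSpace.norm_eq, reNorm]
  congr 1
  exact Finset.sum_congr rfl fun j _ => by rw [Real.norm_eq_abs, _root_.sq_abs]; rfl

lemma reNorm_pwUpd_le (i : Fin n) (ν : EuclideanSpace ℂ (Fin n)) (z : ℂ) :
    reNorm (pwUpd i ν z) ≤ reNorm ν + ‖z - ν i‖ := by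
  rw [reNorm_eq, reNorm_eq]
  have h : reVec (pwUpd i ν z) = reVec ν + EuclideanSpace.single i ((z - ν i).re) := by
    ext j
    by_cases hj : j = i
    · subst hj
      simp [reVec, pwUpd, EuclideanSpace.single_apply]
    · simp [reVec, pwUpd, EuclideanSpace.single_apply, hj]
  rw [h]
  refine (norm_add_le _ _).trans ?_
  have h2 : ‖(EuclideanSpace.single i ((z - ν i).re) : EuclideanSpace ℝ (Fin n))‖
      ≤ ‖z - ν i‖ := by
    rw [EuclideanSpace.norm_single, Real.norm_eq_abs]
    exact (Complex.abs_re_le_norm _)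
  linarith

/-- An entire function's `dslope` at `0` is entire. -/
lemma pw_dslope_entire (f : ℂ → ℂ) (hf : Differentiable ℂ f) :
    Differentiable ℂ (dslope f 0) := by
  intro b
  rcases eq_or_ne b 0 with rfl | hb
  · obtain ⟨p, hp⟩ := hf.analyticAt 0
    exact hp.has_fpower_series_dslope_fslope.analyticAt.differentiableAt
  · exact (differentiableAt_dslope_of_ne hb).mpr (hf b)

/-- Cauchy estimate for `fderiv` of an entire function on `ℂⁿ`. -/
lemma pw_norm_fderiv_le (φ : EuclideanSpace ℂ (Fin n) → ℂ) (hφ : Differentiable ℂ φ)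
    (μ : EuclideanSpace ℂ (Fin n)) {M : ℝ}
    (hM : ∀ x ∈ closedBall μ 1, ‖φ x‖ ≤ M) : ‖fderiv ℂ φ μ‖ ≤ M := by
  have hM0 : 0 ≤ M := le_trans (norm_nonneg _) (hM μ (mem_closedBall_self zero_le_one))
  refine ContinuousLinearMap.opNorm_le_bound _ hM0 fun v => ?_
  rcases eq_or_ne v 0 with rfl | hv
  · simp
  · set u : EuclideanSpace ℂ (Fin n) := (‖v‖ : ℂ)⁻¹ • v with hu
    have hvn : (‖v‖ : ℂ) ≠ 0 := by
      simpa using norm_ne_zero_iff.mpr hv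
    have hun : ‖u‖ = 1 := by
      rw [hu, norm_smul]
      simp [norm_ne_zero_iff.mpr hv]
    have hline : ∀ s : ℂ, HasDerivAt (fun s : ℂ => μ + s • u) u s := by
      intro s
      simpa using ((hasDerivAt_id s).smul_const u).const_add μ
    have hder : HasDerivAt (fun s : ℂ => φ (μ + s • u)) (fderiv ℂ φ μ u) 0 := by
      have := (hφ (μ + (0 : ℂ) • u)).hasFDerivAt.comp_hasDerivAt 0 (hline 0)
      simpa [Function.comp_def] using this
    have hdiff : Differentiable ℂ fun s : ℂ => φ (μ + s • u) := by
      intro s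
      exact ((hφ _).hasFDerivAt.comp_hasDerivAt s (hline s)).differentiableAt
    have hbd : ∀ w ∈ sphere (0 : ℂ) 1, ‖φ (μ + w • u)‖ ≤ M := by
      intro w hw
      apply hM
      have hwu : ‖w • u‖ = 1 := by
        rw [norm_smul, hun, mul_one]
        simpa using hw
      simp [mem_closedBall, dist_eq_norm, hwu]
    have hkey : ‖deriv (fun s : ℂ => φ (μ + s • u)) 0‖ ≤ M / 1 :=
      Complex.norm_deriv_le_of_forall_mem_sphere_norm_le one_pos
        hdiff.diffContOnCl hbd
    rw [hder.deriv] at hkey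
    have hvu : (fderiv ℂ φ μ) v = (‖v‖ : ℂ) • (fderiv ℂ φ μ u) := by
      rw [← map_smul]
      congr 1
      rw [hu, smul_smul, mul_inv_cancel₀ hvn, one_smul]
    rw [hvu, norm_smul, Complex.norm_real, Real.norm_eq_abs,
      _root_.abs_of_nonneg (norm_nonneg v)]
    calc ‖v‖ * ‖(fderiv ℂ φ μ) u‖ ≤ ‖v‖ * (M / 1) :=
          mul_le_mul_of_nonneg_left hkey (norm_nonneg v)
      _ = M * ‖v‖ := by ring

end Aux

noncomputable local instance pwMeasurableSpace {n : ℕ} :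
    MeasurableSpace (EuclideanSpace ℂ (Fin n)) := borel _

local instance pwBorelSpace {n : ℕ} : BorelSpace (EuclideanSpace ℂ (Fin n)) := ⟨rfl⟩

set_option maxHeartbeats 1600000 in
/-- A Paley-Wiener function on `ℂⁿ` vanishing on the hyperplane `ν_i = 0` is divisible by
the coordinate `ν_i` within the space of Paley-Wiener functions. -/
theorem paleyWiener_div_coordinate {n : ℕ} (r : ℝ) (hr : 0 < r) (i : Fin n)
    (φ : EuclideanSpace ℂ (Fin n) → ℂ) (hφ : IsPaleyWienerOfExp r φ)
    (hvan : ∀ ν : EuclideanSpace ℂ (Fin n), ν i = 0 → φ ν = 0) :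
    ∃ ψ : EuclideanSpace ℂ (Fin n) → ℂ,
      IsPaleyWienerOfExp r ψ ∧ ∀ ν, φ ν = ν i * ψ ν := by
  classical
  obtain ⟨hφd, hφb⟩ := hφ
  set e : EuclideanSpace ℂ (Fin n) := EuclideanSpace.single i (1 : ℂ) with he
  set g : EuclideanSpace ℂ (Fin n) → ℂ → ℂ := fun ν z => φ (pwUpd i ν z) with hgdef
  have hgd : ∀ ν, Differentiable ℂ (g ν) := by
    intro ν
    exact hφd.comp (((differentiable_id.sub_const _).smul_const e).const_add ν)
  have hg0 : ∀ ν, g ν 0 = 0 := fun ν => hvan _ (pwUpd_apply_i i ν 0)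
  set ψ : EuclideanSpace ℂ (Fin n) → ℂ := fun ν => dslope (g ν) 0 (ν i) with hψdef
  have hd_entire : ∀ ν, Differentiable ℂ (dslope (g ν) 0) := fun ν => pw_dslope_entire _ (hgd ν)
  -- the divisibility identity
  have key : ∀ ν, φ ν = ν i * ψ ν := by
    intro ν
    rcases eq_or_ne (ν i) 0 with h0 | h0
    · rw [h0, zero_mul]; exact hvan ν h0
    · show φ ν = ν i * dslope (g ν) 0 (ν i)
      rw [dslope_of_ne _ h0, slope_def_field, hg0, sub_zero, sub_zero]
      have hh : g ν (ν i) = φ ν := by rw [hgdef]; simp [pwUpd_self]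
      rw [hh]
      field_simp
  have hψ_ne : ∀ ν, ν i ≠ 0 → ψ ν = φ ν / ν i := by
    intro ν h0
    have hk := key ν
    field_simp [hk]
    rw [hk, mul_comm]

  -- the circle-integral representation on `{|ν i| < 1}`
  set F : EuclideanSpace ℂ (Fin n) → ℝ → ℂ := fun ν θ =>
    (circleMap 0 1 θ - ν i)⁻¹ * φ (pwUpd i ν (circleMap 0 1 θ)) with hFdef
  have hcirc_ne : ∀ θ : ℝ, circleMap 0 1 θ ≠ 0 := by
    intro θ h
    have : ‖circleMap 0 1 θ‖ = 1 := by
      rw [norm_circleMap_zero]; norm_num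
    rw [h] at this; simp at this
  have hrep : ∀ ν : EuclideanSpace ℂ (Fin n), ‖ν i‖ < 1 →
      ψ ν = (2 * (Real.pi : ℂ) * Complex.I)⁻¹ *
        (Complex.I * ∫ θ in (0:ℝ)..(2 * Real.pi), F ν θ) := by
    intro ν hν
    have hdcl : DiffContOnCl ℂ (dslope (g ν) 0) (ball (0:ℂ) 1) :=
      (hd_entire ν).diffContOnCl
    have hmem : (ν i) ∈ ball (0:ℂ) 1 := by
      simpa [mem_ball, Complex.dist_eq] using hν
    have hcirc := hdcl.circleIntegral_sub_inv_smul hmem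
    have hint : (∮ w in C(0,1), (w - ν i)⁻¹ • dslope (g ν) 0 w)
        = Complex.I * ∫ θ in (0:ℝ)..(2 * Real.pi), F ν θ := by
      rw [circleIntegral, ← intervalIntegral.integral_const_mul]
      refine intervalIntegral.integral_congr fun θ _ => ?_
      have hzne := hcirc_ne θ
      simp only [hFdef]
      rw [deriv_circleMap, dslope_of_ne _ hzne, slope_def_field, hg0, sub_zero, sub_zero]
      have hgφ : g ν (circleMap 0 1 θ) = φ (pwUpd i ν (circleMap 0 1 θ)) := rfl
      simp only [smul_eq_mul, hgφ]
      rcases eq_or_ne (circleMap 0 1 θ - ν i) 0 with hzz | hzz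
      · simp [hzz]
      · field_simp [hzne, hzz]
    have h2 : ψ ν = (2 * (Real.pi : ℂ) * Complex.I)⁻¹ *
        ((2 * (Real.pi : ℂ) * Complex.I) • dslope (g ν) 0 (ν i)) := by
      rw [smul_eq_mul, ← mul_assoc, inv_mul_cancel₀ Complex.two_pi_I_ne_zero, one_mul]
    rw [h2, ← hcirc, hint]
  -- differentiability of ψ
  have hproj_cont : Continuous (fun ν : EuclideanSpace ℂ (Fin n) => ν i) :=
    (EuclideanSpace.proj (𝕜 := ℂ) i).continuous
  have hψdiff : Differentiable ℂ ψ := by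
    intro ν₀
    rcases eq_or_ne (ν₀ i) 0 with h0 | h0
    · -- hard case: `ν₀ i = 0`; differentiate under the circle integral
      set P : EuclideanSpace ℂ (Fin n) →L[ℂ] ℂ := EuclideanSpace.proj i with hPdef
      set A' : EuclideanSpace ℂ (Fin n) →L[ℂ] EuclideanSpace ℂ (Fin n) :=
        ContinuousLinearMap.id ℂ _ + (-P).smulRight e with hA'def
      have hupd_fd : ∀ (z : ℂ) (ν : EuclideanSpace ℂ (Fin n)),
          HasFDerivAt (fun μ : EuclideanSpace ℂ (Fin n) => pwUpd i μ z) A' ν := by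
        intro z ν
        have h1 : HasFDerivAt (fun μ : EuclideanSpace ℂ (Fin n) => z - μ i) (-P) ν := by
          exact (P.hasFDerivAt (x := ν)).const_sub z
        exact (hasFDerivAt_id ν).add (h1.smul_const e)
      set F' : EuclideanSpace ℂ (Fin n) → ℝ → (EuclideanSpace ℂ (Fin n) →L[ℂ] ℂ) := fun ν θ =>
        (circleMap 0 1 θ - ν i)⁻¹ • ((fderiv ℂ φ (pwUpd i ν (circleMap 0 1 θ))).comp A')
          + φ (pwUpd i ν (circleMap 0 1 θ)) •
            ((-(((circleMap 0 1 θ - ν i)) ^ 2)⁻¹) • (-P)) with hF'def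
      have hFhasD : ∀ (θ : ℝ) (ν : EuclideanSpace ℂ (Fin n)), circleMap 0 1 θ - ν i ≠ 0 →
          HasFDerivAt (fun μ => F μ θ) (F' ν θ) ν := by
        intro θ ν hne
        have h1 : HasFDerivAt (fun μ : EuclideanSpace ℂ (Fin n) => circleMap 0 1 θ - μ i)
            (-P) ν := by
          exact (P.hasFDerivAt (x := ν)).const_sub (circleMap 0 1 θ)
        have hB : HasFDerivAt
            (fun μ : EuclideanSpace ℂ (Fin n) => (circleMap 0 1 θ - μ i)⁻¹)
            ((-(((circleMap 0 1 θ - ν i)) ^ 2)⁻¹) • (-P)) ν := by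
          have := (hasFDerivAt_inv hne).comp ν h1
          refine this.congr_fderiv ?_
          ext v
          simp [ContinuousLinearMap.smulRight_apply]
          ring
        have hC : HasFDerivAt
            (fun μ : EuclideanSpace ℂ (Fin n) => φ (pwUpd i μ (circleMap 0 1 θ)))
            ((fderiv ℂ φ (pwUpd i ν (circleMap 0 1 θ))).comp A') ν :=
          (hφd _).hasFDerivAt.comp ν (hupd_fd _ ν)
        exact hB.mul hC
      -- bounds
      obtain ⟨M, hM⟩ := (isCompact_closedBall ν₀ 5).exists_bound_of_continuousOn
        hφd.continuous.continuousOn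
      have hM0 : 0 ≤ M := le_trans (norm_nonneg _)
        (hM ν₀ (mem_closedBall_self (by norm_num)))
      have habs_ν : ∀ ν ∈ ball ν₀ (1/4 : ℝ), ‖ν i‖ < 1/4 := by
        intro ν hνb
        have h1 : ‖(ν - ν₀) i‖ ≤ ‖ν - ν₀‖ := pw_coord_le i (ν - ν₀)
        have h2 : (ν - ν₀) i = ν i := by
          have : (ν - ν₀) i = ν i - ν₀ i := rfl
          rw [this, h0, sub_zero]
        rw [h2] at h1
        have h3 := mem_ball_iff_norm.mp hνb
        linarith
      have hsub34 : ∀ (θ : ℝ), ∀ ν ∈ ball ν₀ (1/4:ℝ),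
          (3:ℝ)/4 ≤ ‖circleMap 0 1 θ - ν i‖ := by
        intro θ ν hν
        have h1 : ‖circleMap 0 1 θ‖ = 1 := by
          rw [norm_circleMap_zero]; norm_num
        have h2 := habs_ν ν hν
        have h3 : ‖circleMap 0 1 θ‖ - ‖ν i‖
            ≤ ‖circleMap 0 1 θ - ν i‖ := by
          simpa using norm_sub_norm_le (circleMap 0 1 θ) (ν i)
        linarith
      have hsubne : ∀ (θ : ℝ), ∀ ν ∈ ball ν₀ (1/4:ℝ), circleMap 0 1 θ - ν i ≠ 0 := by
        intro θ ν hν h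
        have := hsub34 θ ν hν
        rw [h] at this; simp at this; linarith
      have hpath_cont : ∀ ν : EuclideanSpace ℂ (Fin n),
          Continuous fun θ => pwUpd i ν (circleMap 0 1 θ) :=
        fun ν => continuous_const.add
          (((continuous_circleMap 0 1).sub continuous_const).smul continuous_const)
      have hFcont : ∀ ν ∈ ball ν₀ (1/4:ℝ), Continuous fun θ => F ν θ := by
        intro ν hν
        apply Continuous.mul
        · exact Continuous.inv₀ ((continuous_circleMap 0 1).sub continuous_const)
            (fun θ => hsubne θ ν hν)
        · exact hφd.continuous.comp (hpath_cont ν)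
      have hmemB : ∀ (θ : ℝ), ∀ ν ∈ ball ν₀ (1/4:ℝ),
          ∀ x ∈ closedBall (pwUpd i ν (circleMap 0 1 θ)) 1, x ∈ closedBall ν₀ 5 := by
        intro θ ν hν x hx
        have h1 : ‖pwUpd i ν (circleMap 0 1 θ) - ν‖ ≤ 9/4 := by
          rw [pwUpd_sub_norm]
          have ha : ‖circleMap 0 1 θ‖ = 1 := by
            rw [norm_circleMap_zero]; norm_num
          have hb := habs_ν ν hν
          have h3 : ‖circleMap 0 1 θ - ν i‖
              ≤ ‖circleMap 0 1 θ‖ + ‖ν i‖ := by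
            simpa using norm_sub_le (circleMap 0 1 θ) (ν i)
          linarith
        have h2 := mem_ball_iff_norm.mp hν
        have h3 := mem_closedBall_iff_norm.mp hx
        rw [mem_closedBall_iff_norm]
        calc ‖x - ν₀‖ = ‖(x - pwUpd i ν (circleMap 0 1 θ)) + (pwUpd i ν (circleMap 0 1 θ) - ν)
              + (ν - ν₀)‖ := by congr 1; abel
          _ ≤ ‖x - pwUpd i ν (circleMap 0 1 θ)‖ + ‖pwUpd i ν (circleMap 0 1 θ) - ν‖
              + ‖ν - ν₀‖ := norm_add₃_le
          _ ≤ 1 + 9/4 + 1/4 := by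
              apply add_le_add (add_le_add h3 h1) h2.le
          _ ≤ 5 := by norm_num
      have hfdb : ∀ (θ : ℝ), ∀ ν ∈ ball ν₀ (1/4:ℝ),
          ‖fderiv ℂ φ (pwUpd i ν (circleMap 0 1 θ))‖ ≤ M :=
        fun θ ν hν => pw_norm_fderiv_le φ hφd _ (fun x hx => hM x (hmemB θ ν hν x hx))
      have hPle : ‖P‖ ≤ 1 :=
        ContinuousLinearMap.opNorm_le_bound _ zero_le_one fun ν => by
          rw [one_mul]
          exact (pw_coord_le i ν)
      have hA'le : ‖A'‖ ≤ 2 := by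
        calc ‖A'‖ ≤ ‖ContinuousLinearMap.id ℂ (EuclideanSpace ℂ (Fin n))‖
              + ‖(-P).smulRight e‖ := norm_add_le _ _
          _ ≤ 1 + 1 := by
              apply add_le_add ContinuousLinearMap.norm_id_le
              rw [ContinuousLinearMap.norm_smulRight_apply, norm_neg, he,
                EuclideanSpace.norm_single]
              simpa using hPle
          _ = 2 := by norm_num
      have hφb' : ∀ (θ : ℝ), ∀ ν ∈ ball ν₀ (1/4:ℝ),
          ‖φ (pwUpd i ν (circleMap 0 1 θ))‖ ≤ M := by
        intro θ ν hν
        exact hM _ (hmemB θ ν hν _ (mem_closedBall_self zero_le_one))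
      have hF'le : ∀ (θ : ℝ), ∀ ν ∈ ball ν₀ (1/4:ℝ), ‖F' ν θ‖ ≤ 8 * M := by
        intro θ ν hν
        have h34 := hsub34 θ ν hν
        have hb2 : ‖(circleMap 0 1 θ - ν i)⁻¹‖ ≤ 2 := by
          rw [norm_inv]
          calc (‖circleMap 0 1 θ - ν i‖)⁻¹ ≤ ((3:ℝ)/4)⁻¹ := by
                exact inv_anti₀ (by norm_num) h34
            _ ≤ 2 := by norm_num
        have hbsq : ‖((((circleMap 0 1 θ - ν i)) ^ 2)⁻¹)‖ ≤ 2 := by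
          rw [norm_inv, norm_pow]
          calc (‖circleMap 0 1 θ - ν i‖ ^ 2)⁻¹ ≤ (((3:ℝ)/4) ^ 2)⁻¹ := by
                apply inv_anti₀ (by positivity)
                apply pow_le_pow_left₀ (by norm_num) h34
            _ ≤ 2 := by norm_num
        calc ‖F' ν θ‖ ≤ ‖(circleMap 0 1 θ - ν i)⁻¹ •
              ((fderiv ℂ φ (pwUpd i ν (circleMap 0 1 θ))).comp A')‖
              + ‖φ (pwUpd i ν (circleMap 0 1 θ)) •
              ((-(((circleMap 0 1 θ - ν i)) ^ 2)⁻¹) • (-P))‖ := norm_add_le _ _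
          _ ≤ 2 * (M * 2) + M * (2 * 1) := by
              apply add_le_add
              · refine (norm_smul_le ((circleMap 0 1 θ - ν i)⁻¹)
                  ((fderiv ℂ φ (pwUpd i ν (circleMap 0 1 θ))).comp A')).trans ?_
                apply mul_le_mul hb2 ?_ (norm_nonneg _) (by norm_num)
                calc ‖(fderiv ℂ φ (pwUpd i ν (circleMap 0 1 θ))).comp A'‖
                    ≤ ‖fderiv ℂ φ (pwUpd i ν (circleMap 0 1 θ))‖ * ‖A'‖ :=
                      ContinuousLinearMap.opNorm_comp_le _ _
                  _ ≤ M * 2 := by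
                      apply mul_le_mul (hfdb θ ν hν) hA'le (norm_nonneg _) hM0
              · refine (norm_smul_le (φ (pwUpd i ν (circleMap 0 1 θ)))
                  ((-(((circleMap 0 1 θ - ν i)) ^ 2)⁻¹) • (-P))).trans ?_
                apply mul_le_mul (hφb' θ ν hν) ?_ (norm_nonneg _) hM0
                refine (norm_smul_le (-(((circleMap 0 1 θ - ν i)) ^ 2)⁻¹) (-P)).trans ?_
                rw [norm_neg]
                exact mul_le_mul hbsq (by rw [norm_neg]; exact hPle) (norm_nonneg _) (by norm_num)
          _ ≤ 8 * M := by nlinarith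
      -- apply differentiation under the integral sign
      have main := intervalIntegral.hasFDerivAt_integral_of_dominated_of_fderiv_le
        (𝕜 := ℂ) (μ := MeasureTheory.volume) (F := F) (F' := F') (x₀ := ν₀)
        (a := 0) (b := 2*Real.pi) (bound := fun _ => 8*M) (s := ball ν₀ (1/4))
        (ball_mem_nhds ν₀ (by norm_num))
        (by
          filter_upwards [ball_mem_nhds ν₀ (by norm_num : (0:ℝ) < 1/4)] with ν hν
          exact (hFcont ν hν).aestronglyMeasurable)
        ((hFcont ν₀ (mem_ball_self (by norm_num))).intervalIntegrable _ _)
        (by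
          have hm1 : Measurable fun θ =>
              fderiv ℂ φ (pwUpd i ν₀ (circleMap 0 1 θ)) :=
            (measurable_fderiv ℂ φ).comp (hpath_cont ν₀).measurable
          have hm2 : Measurable fun θ =>
              (fderiv ℂ φ (pwUpd i ν₀ (circleMap 0 1 θ))).comp A' :=
            (((ContinuousLinearMap.compL ℂ (EuclideanSpace ℂ (Fin n))
              (EuclideanSpace ℂ (Fin n)) ℂ).flip A').continuous.measurable).comp hm1
          have hb0 : ν₀ ∈ ball ν₀ (1/4:ℝ) := mem_ball_self (by norm_num)
          have hc1 : Continuous fun θ => (circleMap 0 1 θ - ν₀ i)⁻¹ :=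
            Continuous.inv₀ ((continuous_circleMap 0 1).sub continuous_const)
              (fun θ => hsubne θ ν₀ hb0)
          have ht1 : MeasureTheory.AEStronglyMeasurable (fun θ =>
              (circleMap 0 1 θ - ν₀ i)⁻¹ •
                ((fderiv ℂ φ (pwUpd i ν₀ (circleMap 0 1 θ))).comp A'))
              (MeasureTheory.volume.restrict (Set.uIoc 0 (2*Real.pi))) :=
            MeasureTheory.AEStronglyMeasurable.smul hc1.aestronglyMeasurable
              hm2.stronglyMeasurable.aestronglyMeasurable
          have hc2 : Continuous fun θ => φ (pwUpd i ν₀ (circleMap 0 1 θ)) •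
              ((-(((circleMap 0 1 θ - ν₀ i)) ^ 2)⁻¹) • (-P)) := by
            apply Continuous.smul (hφd.continuous.comp (hpath_cont ν₀))
            exact (Continuous.inv₀ (((continuous_circleMap 0 1).sub continuous_const).pow 2)
              (fun θ => pow_ne_zero 2 (hsubne θ ν₀ hb0))).neg.smul continuous_const
          exact ht1.add hc2.aestronglyMeasurable)
        (MeasureTheory.ae_of_all _ fun θ _ ν hν => hF'le θ ν hν)
        (intervalIntegrable_const)
        (MeasureTheory.ae_of_all _ fun θ _ ν hν => hFhasD θ ν (hsubne θ ν hν))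
      -- conclude
      have hΦdiff : DifferentiableAt ℂ (fun ν => (2*(Real.pi:ℂ)*Complex.I)⁻¹ *
          (Complex.I * ∫ θ in (0:ℝ)..(2*Real.pi), F ν θ)) ν₀ :=
        (main.differentiableAt.const_mul Complex.I).const_mul _
      have hev : ψ =ᶠ[nhds ν₀] fun ν => (2*(Real.pi:ℂ)*Complex.I)⁻¹ *
          (Complex.I * ∫ θ in (0:ℝ)..(2*Real.pi), F ν θ) := by
        have hopen : IsOpen {ν : EuclideanSpace ℂ (Fin n) | ‖ν i‖ < 1} :=
          isOpen_lt (continuous_norm.comp hproj_cont) continuous_const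
        have hmem0 : ν₀ ∈ {ν : EuclideanSpace ℂ (Fin n) | ‖ν i‖ < 1} := by
          simp [Set.mem_setOf_eq, h0]
        filter_upwards [hopen.mem_nhds hmem0] with ν hν
        exact hrep ν hν
      exact hΦdiff.congr_of_eventuallyEq hev
    · -- easy case
      have hev : ∀ᶠ ν in nhds ν₀, ψ ν = φ ν * (ν i)⁻¹ := by
        filter_upwards [hproj_cont.continuousAt.eventually_ne h0] with ν hν
        rw [hψ_ne ν hν, div_eq_mul_inv]
      have hproj_diff : DifferentiableAt ℂ (fun ν : EuclideanSpace ℂ (Fin n) => ν i) ν₀ :=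
        (EuclideanSpace.proj (𝕜 := ℂ) i).differentiableAt
      have hdiv : DifferentiableAt ℂ
          (fun ν : EuclideanSpace ℂ (Fin n) => φ ν * (ν i)⁻¹) ν₀ :=
        (hφd ν₀).mul (hproj_diff.inv h0)
      exact hdiv.congr_of_eventuallyEq hev
  -- the Paley-Wiener estimates for ψ
  have hψbound : ∀ N : ℕ, ∃ C : ℝ, ∀ ν,
      (1 + ‖ν‖) ^ N * ‖ψ ν‖ ≤ C * Real.exp (r * reNorm ν) := by
    intro N
    obtain ⟨C, hC⟩ := hφb N
    have hC0 : 0 ≤ C := by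
      have h := hC 0
      have h1 : (0:ℝ) ≤ (1 + ‖(0 : EuclideanSpace ℂ (Fin n))‖) ^ N * ‖φ 0‖ := by
        positivity
      nlinarith [Real.exp_pos (r * reNorm (0 : EuclideanSpace ℂ (Fin n)))]
    refine ⟨C + 3 ^ N * C * Real.exp (2 * r), fun ν => ?_⟩
    have hpos : (0:ℝ) < (1 + ‖ν‖) ^ N := by positivity
    have hexp_pos := Real.exp_pos (r * reNorm ν)
    rcases lt_or_ge (‖ν i‖) 1 with hlt | hge
    · -- maximum principle on the unit disc in the i-th coordinate
      set K : ℝ := 3 ^ N * C * Real.exp (2 * r) * Real.exp (r * reNorm ν) / (1 + ‖ν‖) ^ N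
        with hKdef
      have hfr : ∀ z : ℂ, ‖z‖ = 1 → ‖φ (pwUpd i ν z)‖ ≤ K := by
        intro z hz1
        set μ := pwUpd i ν z with hμ
        have hz2 : ‖z - ν i‖ ≤ 2 := by
          calc ‖z - ν i‖ ≤ ‖z‖ + ‖ν i‖ := by
                simpa using norm_sub_le z (ν i)
            _ ≤ 1 + 1 := by rw [hz1]; linarith
            _ = 2 := by norm_num
        have hν_le : ‖ν‖ ≤ ‖μ‖ + 2 := by
          have : ‖ν‖ ≤ ‖μ‖ + ‖μ - ν‖ := by
            calc ‖ν‖ = ‖μ - (μ - ν)‖ := by rw [sub_sub_cancel]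
              _ ≤ ‖μ‖ + ‖μ - ν‖ := norm_sub_le _ _
          rw [hμ, pwUpd_sub_norm] at this
          linarith
        have hre : reNorm μ ≤ reNorm ν + 2 :=
          (reNorm_pwUpd_le i ν z).trans (by linarith)
        have hexp : Real.exp (r * reNorm μ) ≤ Real.exp (2 * r) * Real.exp (r * reNorm ν) := by
          rw [← Real.exp_add]
          apply Real.exp_le_exp.2
          nlinarith [hr.le]
        have hpow : (1 + ‖ν‖) ^ N ≤ 3 ^ N * (1 + ‖μ‖) ^ N := by
          rw [← mul_pow]
          apply pow_le_pow_left₀ (by positivity)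
          have := norm_nonneg μ
          linarith
        rw [hKdef, le_div_iff₀ hpos]
        calc ‖φ μ‖ * (1 + ‖ν‖) ^ N
            ≤ ‖φ μ‖ * (3 ^ N * (1 + ‖μ‖) ^ N) := by
              exact mul_le_mul_of_nonneg_left hpow (norm_nonneg _)
          _ = 3 ^ N * ((1 + ‖μ‖) ^ N * ‖φ μ‖) := by ring
          _ ≤ 3 ^ N * (C * Real.exp (r * reNorm μ)) := by
              apply mul_le_mul_of_nonneg_left (hC μ) (by positivity)
          _ ≤ 3 ^ N * (C * (Real.exp (2 * r) * Real.exp (r * reNorm ν))) := by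
              apply mul_le_mul_of_nonneg_left _ (by positivity)
              exact mul_le_mul_of_nonneg_left hexp hC0
          _ = 3 ^ N * C * Real.exp (2 * r) * Real.exp (r * reNorm ν) := by ring
      have hmax : ‖ψ ν‖ ≤ K := by
        have hdc : DiffContOnCl ℂ (dslope (g ν) 0) (ball (0:ℂ) 1) :=
          (hd_entire ν).diffContOnCl
        have hK0 : 0 ≤ K := by
          rw [hKdef]; positivity
        have hfr' : ∀ z ∈ frontier (ball (0:ℂ) 1), ‖dslope (g ν) 0 z‖ ≤ K := by
          rw [frontier_ball (0:ℂ) one_ne_zero]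
          intro z hz
          have hz1 : ‖z‖ = 1 := by
            simpa [mem_sphere_iff_norm] using hz
          have hzne : z ≠ 0 := by
            intro h; rw [h] at hz1; simp at hz1
          rw [dslope_of_ne _ hzne, slope_def_field, hg0, sub_zero, sub_zero]
          rw [norm_div, hz1, div_one]
          exact hfr z hz1
        have hcl : (ν i) ∈ closure (ball (0:ℂ) 1) := by
          apply subset_closure
          simpa [mem_ball, Complex.dist_eq] using hlt
        have := Complex.norm_le_of_forall_mem_frontier_norm_le isBounded_ball hdc hfr' hcl
        simpa using this
      calc (1 + ‖ν‖) ^ N * ‖ψ ν‖ ≤ (1 + ‖ν‖) ^ N * K :=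
            mul_le_mul_of_nonneg_left hmax hpos.le
        _ = 3 ^ N * C * Real.exp (2 * r) * Real.exp (r * reNorm ν) := by
            rw [hKdef]; field_simp
        _ ≤ (C + 3 ^ N * C * Real.exp (2 * r)) * Real.exp (r * reNorm ν) := by
            have ht : 0 ≤ C * Real.exp (r * reNorm ν) := mul_nonneg hC0 hexp_pos.le
            nlinarith
    · -- |ν i| ≥ 1
      have hne : ν i ≠ 0 := by
        intro h; rw [h] at hge; simp at hge; linarith
      have habs : ‖ψ ν‖ ≤ ‖φ ν‖ := by
        rw [hψ_ne ν hne, norm_div]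
        calc ‖φ ν‖ / ‖ν i‖ ≤ ‖φ ν‖ / 1 := by
              apply div_le_div_of_nonneg_left (norm_nonneg _) one_pos hge
            -- careful: this lemma needs abs (φ ν) > 0 maybe; fix below
          _ = ‖φ ν‖ := div_one _
      calc (1 + ‖ν‖) ^ N * ‖ψ ν‖ ≤ (1 + ‖ν‖) ^ N * ‖φ ν‖ :=
            mul_le_mul_of_nonneg_left habs hpos.le
        _ ≤ C * Real.exp (r * reNorm ν) := hC ν
        _ ≤ (C + 3 ^ N * C * Real.exp (2 * r)) * Real.exp (r * reNorm ν) := by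
            have ht : 0 ≤ 3 ^ N * C * Real.exp (2 * r) * Real.exp (r * reNorm ν) := by positivity
            nlinarith
  exact ⟨ψ, ⟨hψdiff, hψbound⟩, key⟩
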